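/- Let ν be the measure on J = {1,...,k} assigning mass d_j/(d₁+...+d_k) to j, and μ = ∏_{i=1}^∞ ν the product measure on W = J^∞. Then for the dynamical eigensystem (X, g₁,...,g_k, L) with g_j*L ≅ L^{⊗d_j}, the Kawaguchi canonical height satisfies ĥ_H(x) = ∫_W ĥ_{f_w}(x) dμ(w) for all x ∈ X(K̄). In particular |ĥ_H(x) − h_L(x)| ≤ 4c with c = max_j c(g_j). -/

import Mathlib

open MeasureTheory
open scoped BigOperators

private def compSeq {X : Type*} {k : ℕ} (g : Fin k → X → X) : (n : ℕ) → (Fin n → Fin k) → X → X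
  | 0, _, x => x
  | n + 1, v, x => compSeq g n (Fin.tail v) (g (v 0) x)

/-- Kawaguchi's integral formula: let `ν` assign mass `d_j/(d₁+...+d_k)` to `j ∈ {1,...,k}`
and let `μ = ∏ ν` be the product measure on `W = J^∞` (characterized on cylinders).
Then the canonical height `ĥ_H` of the dynamical eigensystem (characterized by
`ĥ_H = h + O(1)` and `Σ_j ĥ_H∘g_j = (Σ_j d_j)·ĥ_H`) satisfies
`ĥ_H(x) = ∫_W ĥ_{f_w}(x) dμ(w)`; in particular `|ĥ_H(x) − h(x)| ≤ 4c`. -/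
theorem canonical_height_integral_formula {X : Type*} (k : ℕ) (hk : 0 < k)
    (h : X → ℝ) (g : Fin k → X → X) (d : Fin k → ℕ) (hd : ∀ j, 2 ≤ d j)
    (c : ℝ) (hc : ∀ j (x : X), |h (g j x) / (d j : ℝ) - h x| ≤ c)
    (ν : Measure (Fin k))
    (hν : ∀ j : Fin k, ν {j} = ENNReal.ofReal ((d j : ℝ) / ∑ i, (d i : ℝ)))
    (μ : Measure (ℕ → Fin k)) [IsProbabilityMeasure μ]
    (hμ : ∀ (F : Finset ℕ) (s : ℕ → Set (Fin k)),
      μ {w | ∀ i ∈ F, w i ∈ s i} = ∏ i ∈ F, ν (s i))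
    (Hw : (ℕ → Fin k) → X → ℝ)
    (hHw1 : ∀ w (x : X), |Hw w x - h x| ≤ 2 * c)
    (hHw2 : ∀ w (x : X), Hw (fun i => w (i + 1)) (g (w 0) x) = (d (w 0) : ℝ) * Hw w x)
    (HH : X → ℝ)
    (hHHbd : ∃ C : ℝ, ∀ x : X, |HH x - h x| ≤ C)
    (hHHfe : ∀ x : X, ∑ j, HH (g j x) = (∑ j, (d j : ℝ)) * HH x) :
    (∀ x : X, HH x = ∫ w, Hw w x ∂μ) ∧ ∀ x : X, |HH x - h x| ≤ 4 * c := by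
  classical
  rcases isEmpty_or_nonempty X with hX | hX
  · exact ⟨fun x => (hX.false x).elim, fun x => (hX.false x).elim⟩
  obtain ⟨x₀⟩ := hX
  obtain ⟨C, hC⟩ := hHHbd
  have hc0 : 0 ≤ c := le_trans (abs_nonneg _) (hc ⟨0, hk⟩ x₀)
  have hC0 : 0 ≤ C := le_trans (abs_nonneg _) (hC x₀)
  have hdpos : ∀ j, (0:ℝ) < d j := fun j => by
    exact_mod_cast lt_of_lt_of_le Nat.zero_lt_two (hd j)
  have hd2 : ∀ j, (2:ℝ) ≤ d j := fun j => by exact_mod_cast hd j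
  set D : ℝ := ∑ j, (d j : ℝ) with hD
  have hDpos : 0 < D := Finset.sum_pos (fun j _ => hdpos j) ⟨⟨0, hk⟩, Finset.mem_univ _⟩
  have hkD : (k:ℝ) * 2 ≤ D := by
    calc (k:ℝ) * 2 = ∑ _j : Fin k, (2:ℝ) := by
          rw [Finset.sum_const, Finset.card_univ, Fintype.card_fin, nsmul_eq_mul]
      _ ≤ D := Finset.sum_le_sum fun j _ => hd2 j
  have hPd : ∀ (n : ℕ) (v : Fin n → Fin k), (0:ℝ) < ∏ i, (d (v i):ℝ) :=
    fun n v => Finset.prod_pos fun i _ => hdpos _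
  have hPd2 : ∀ (n : ℕ) (v : Fin n → Fin k), (2:ℝ)^n ≤ ∏ i, (d (v i):ℝ) := by
    intro n v
    calc (2:ℝ)^n = ∏ _i : Fin n, (2:ℝ) := by
          rw [Finset.prod_const, Finset.card_univ, Fintype.card_fin]
      _ ≤ _ := Finset.prod_le_prod (fun i _ => by norm_num) (fun i _ => hd2 _)
  -- telescoping identity
  have key1 : ∀ (n : ℕ) (w : ℕ → Fin k) (x : X),
      Hw (fun i => w (i + n)) (compSeq g n (fun i : Fin n => w (i:ℕ)) x)
        = (∏ i ∈ Finset.range n, (d (w i) : ℝ)) * Hw w x := by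
    intro n
    induction n with
    | zero => intro w x; simp [compSeq]
    | succ n ih =>
      intro w x
      have h1 : compSeq g (n+1) (fun i : Fin (n+1) => w (i:ℕ)) x
          = compSeq g n (fun i : Fin n => w ((i:ℕ) + 1)) (g (w 0) x) := by
        rfl
      have h2 := ih (fun i => w (i + 1)) (g (w 0) x)
      have h3 : (fun i => w (i + (n+1))) = fun i => w (i + n + 1) := rfl
      rw [h1, h3]
      rw [show (fun i : Fin n => w ((i:ℕ) + 1)) = (fun i : Fin n => (fun j => w (j+1)) (i:ℕ)) from rfl]
      rw [h2, hHw2 w x, Finset.prod_range_succ']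
      ring
  -- approximation bound
  have key2 : ∀ (n : ℕ) (w : ℕ → Fin k) (x : X),
      |Hw w x - h (compSeq g n (fun i : Fin n => w (i:ℕ)) x)
          / ∏ i : Fin n, (d (w (i:ℕ)) : ℝ)| ≤ 2 * c / 2 ^ n := by
    intro n w x
    have hP : (∏ i : Fin n, (d (w (i:ℕ)):ℝ)) = ∏ i ∈ Finset.range n, (d (w i):ℝ) :=
      Fin.prod_univ_eq_prod_range (fun m => (d (w m) : ℝ)) n
    have hPpos : 0 < ∏ i : Fin n, (d (w (i:ℕ)):ℝ) := hPd n _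
    have hP2 : (2:ℝ)^n ≤ ∏ i : Fin n, (d (w (i:ℕ)):ℝ) := hPd2 n _
    have hA : Hw (fun i => w (i + n)) (compSeq g n (fun i : Fin n => w (i:ℕ)) x)
        = (∏ i : Fin n, (d (w (i:ℕ)):ℝ)) * Hw w x := by rw [key1 n w x, hP]
    have hwx : Hw w x = Hw (fun i => w (i + n)) (compSeq g n (fun i : Fin n => w (i:ℕ)) x)
        / ∏ i : Fin n, (d (w (i:ℕ)):ℝ) := by
      rw [hA]; field_simp
    rw [hwx, div_sub_div_same, abs_div, abs_of_pos hPpos]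
    exact div_le_div₀ (by linarith) (hHw1 _ _) (by positivity) hP2
  -- cylinder sets are measurable
  have hcyl : ∀ (n : ℕ) (v : Fin n → Fin k),
      MeasurableSet {w : ℕ → Fin k | (fun i : Fin n => w (i:ℕ)) = v} := by
    intro n v
    have hset : {w : ℕ → Fin k | (fun i : Fin n => w (i:ℕ)) = v}
        = ⋂ i : Fin n, (fun w : ℕ → Fin k => w (i:ℕ)) ⁻¹' {v i} := by
      ext w; simp [funext_iff]
    rw [hset]
    exact MeasurableSet.iInter fun i =>
      (measurable_pi_apply (i:ℕ)) (measurableSet_singleton (v i))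
  -- representation of cylinder functions as sums of indicators
  have hrep : ∀ (n : ℕ) (val : (Fin n → Fin k) → ℝ),
      (fun w : ℕ → Fin k => val (fun i : Fin n => w (i:ℕ)))
        = fun w => ∑ v : Fin n → Fin k,
            Set.indicator {w' : ℕ → Fin k | (fun i : Fin n => w' (i:ℕ)) = v}
              (fun _ => val v) w := by
    intro n val
    funext w
    rw [Finset.sum_eq_single (fun i : Fin n => w (i:ℕ))]
    · simp [Set.indicator_apply]
    · intro v _ hv
      simp only [Set.indicator_apply, Set.mem_setOf_eq]
      exact if_neg fun hh => hv hh.symm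
    · intro hmem; exact absurd (Finset.mem_univ _) hmem
  have hintval : ∀ (n : ℕ) (val : (Fin n → Fin k) → ℝ),
      Integrable (fun w : ℕ → Fin k => val (fun i : Fin n => w (i:ℕ))) μ := by
    intro n val
    rw [hrep n val]
    exact integrable_finset_sum _ fun v _ => (integrable_const _).indicator (hcyl n v)
  have hmeasval : ∀ (n : ℕ) (val : (Fin n → Fin k) → ℝ),
      Measurable (fun w : ℕ → Fin k => val (fun i : Fin n => w (i:ℕ))) := by
    intro n val
    rw [hrep n val]
    exact Finset.measurable_sum _ fun v _ => measurable_const.indicator (hcyl n v)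
  -- measure of cylinders
  have hmeasμ : ∀ (n : ℕ) (v : Fin n → Fin k),
      μ {w : ℕ → Fin k | (fun i : Fin n => w (i:ℕ)) = v}
        = ENNReal.ofReal ((∏ i, (d (v i):ℝ)) / D^n) := by
    intro n v
    have hset : {w : ℕ → Fin k | (fun i : Fin n => w (i:ℕ)) = v}
        = {w : ℕ → Fin k | ∀ i ∈ Finset.range n,
            w i ∈ (fun m => if hm : m < n then ({v ⟨m, hm⟩} : Set (Fin k)) else Set.univ) i} := by
      ext w
      simp only [Set.mem_setOf_eq, funext_iff, Finset.mem_range]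
      constructor
      · intro hw i hi
        simp [hi, hw ⟨i, hi⟩]
      · intro hw i
        have h2 := hw (i:ℕ) i.isLt
        simp only [i.isLt, dif_pos] at h2
        simpa [Fin.eta] using h2
    rw [hset, hμ]
    rw [← Fin.prod_univ_eq_prod_range
      (fun i => ν ((fun m => if hm : m < n then ({v ⟨m, hm⟩} : Set (Fin k)) else Set.univ) i)) n]
    have hterm : ∀ i : Fin n,
        ν ((fun m => if hm : m < n then ({v ⟨m, hm⟩} : Set (Fin k)) else Set.univ) (i:ℕ))
          = ENNReal.ofReal ((d (v i):ℝ)/D) := by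
      intro i
      simp only [i.isLt, dif_pos, Fin.eta]
      exact hν (v i)
    rw [Finset.prod_congr rfl fun i _ => hterm i]
    rw [← ENNReal.ofReal_prod_of_nonneg
      (fun i _ => div_nonneg (Nat.cast_nonneg _) hDpos.le)]
    congr 1
    rw [Finset.prod_div_distrib, Finset.prod_const, Finset.card_univ, Fintype.card_fin]
  -- integral of cylinder functions
  have key3 : ∀ (n : ℕ) (val : (Fin n → Fin k) → ℝ),
      (∫ w, val (fun i : Fin n => w (i:ℕ)) ∂μ)
        = ∑ v : Fin n → Fin k, ((∏ i, (d (v i):ℝ)) / D^n) * val v := by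
    intro n val
    rw [hrep n val]
    rw [integral_finset_sum _ fun v _ => (integrable_const _).indicator (hcyl n v)]
    refine Finset.sum_congr rfl fun v _ => ?_
    rw [integral_indicator_const _ (hcyl n v), measureReal_def, hmeasμ n v,
      ENNReal.toReal_ofReal
        (div_nonneg (Finset.prod_nonneg fun i _ => Nat.cast_nonneg _) (pow_nonneg hDpos.le n)),
      smul_eq_mul]
  -- integral of the n-th approximation
  have key4 : ∀ (n : ℕ) (x : X),
      (∫ w, (h (compSeq g n (fun i : Fin n => w (i:ℕ)) x) / ∏ i : Fin n, (d (w (i:ℕ)):ℝ)) ∂μ)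
        = (∑ v : Fin n → Fin k, h (compSeq g n v x)) / D^n := by
    intro n x
    have h0 := key3 n (fun v => h (compSeq g n v x) / ∏ i, (d (v i):ℝ))
    calc (∫ w, (h (compSeq g n (fun i : Fin n => w (i:ℕ)) x) / ∏ i : Fin n, (d (w (i:ℕ)):ℝ)) ∂μ)
        = ∑ v : Fin n → Fin k,
            ((∏ i, (d (v i):ℝ)) / D^n) * (h (compSeq g n v x) / ∏ i, (d (v i):ℝ)) := by
          simpa using h0
      _ = ∑ v : Fin n → Fin k, h (compSeq g n v x) / D^n := by
          refine Finset.sum_congr rfl fun v _ => ?_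
          have hne := (hPd n v).ne'
          have hDn := (pow_pos hDpos n).ne'
          field_simp
      _ = (∑ v : Fin n → Fin k, h (compSeq g n v x)) / D^n := by rw [Finset.sum_div]
  -- functional equation iterated
  have keyHH : ∀ (n : ℕ) (x : X),
      ∑ v : Fin n → Fin k, HH (compSeq g n v x) = D ^ n * HH x := by
    intro n
    induction n with
    | zero => intro x; simp [compSeq]
    | succ n ih =>
      intro x
      have e := Equiv.sum_comp (Fin.consEquiv (fun _ : Fin (n+1) => Fin k))
        (fun v : Fin (n+1) → Fin k => HH (compSeq g (n+1) v x))
      rw [← e, Fintype.sum_prod_type]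
      have hcons : ∀ (j : Fin k) (t : Fin n → Fin k),
          HH (compSeq g (n+1) ((Fin.consEquiv fun _ : Fin (n+1) => Fin k) (j, t)) x)
            = HH (compSeq g n t (g j x)) := by
        intro j t
        show HH (compSeq g n (Fin.tail (Fin.cons (α := fun _ => Fin k) j t))
          (g (Fin.cons (α := fun _ => Fin k) j t 0) x)) = _
        rw [Fin.tail_cons, Fin.cons_zero]
      calc ∑ j : Fin k, ∑ t : Fin n → Fin k,
              HH (compSeq g (n+1) ((Fin.consEquiv fun _ : Fin (n+1) => Fin k) (j, t)) x)
          = ∑ j : Fin k, ∑ t : Fin n → Fin k, HH (compSeq g n t (g j x)) := by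
            exact Finset.sum_congr rfl fun j _ => Finset.sum_congr rfl fun t _ => hcons j t
        _ = ∑ j : Fin k, D^n * HH (g j x) :=
            Finset.sum_congr rfl fun j _ => ih (g j x)
        _ = D^n * ∑ j : Fin k, HH (g j x) := by rw [Finset.mul_sum]
        _ = D^n * (D * HH x) := by rw [hHHfe x]
        _ = D^(n+1) * HH x := by ring
  -- bound (a)
  have keyA : ∀ (n : ℕ) (x : X),
      |HH x - (∑ v : Fin n → Fin k, h (compSeq g n v x)) / D^n| ≤ C / 2^n := by
    intro n x
    have hDn : (0:ℝ) < D^n := pow_pos hDpos n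
    have h1 : |D^n * HH x - ∑ v : Fin n → Fin k, h (compSeq g n v x)| ≤ (k:ℝ)^n * C := by
      rw [← keyHH n x, ← Finset.sum_sub_distrib]
      calc |∑ v : Fin n → Fin k, (HH (compSeq g n v x) - h (compSeq g n v x))|
          ≤ ∑ v : Fin n → Fin k, |HH (compSeq g n v x) - h (compSeq g n v x)| :=
            Finset.abs_sum_le_sum_abs _ _
        _ ≤ ∑ _v : Fin n → Fin k, C := Finset.sum_le_sum fun v _ => hC _
        _ = (k:ℝ)^n * C := by
            rw [Finset.sum_const, Finset.card_univ, Fintype.card_fun, Fintype.card_fin,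
              Fintype.card_fin, nsmul_eq_mul]
            push_cast
            ring
    have h2 : HH x - (∑ v : Fin n → Fin k, h (compSeq g n v x)) / D^n
        = (D^n * HH x - ∑ v : Fin n → Fin k, h (compSeq g n v x)) / D^n := by
      field_simp
    rw [h2, abs_div, abs_of_pos hDn, div_le_div_iff₀ hDn (pow_pos two_pos n)]
    calc |D^n * HH x - ∑ v : Fin n → Fin k, h (compSeq g n v x)| * 2^n
        ≤ ((k:ℝ)^n * C) * 2^n :=
          mul_le_mul_of_nonneg_right h1 (pow_nonneg (by norm_num) n)
      _ = C * ((k:ℝ) * 2)^n := by rw [mul_pow]; ring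
      _ ≤ C * D^n :=
          mul_le_mul_of_nonneg_left (pow_le_pow_left₀ (by positivity) hkD n) hC0
  -- measurability and integrability of Hw · x
  have hmeasHw : ∀ x : X, Measurable (fun w : ℕ → Fin k => Hw w x) := by
    intro x
    have happrox : ∀ n : ℕ, Measurable (fun w : ℕ → Fin k =>
        h (compSeq g n (fun i : Fin n => w (i:ℕ)) x) / ∏ i : Fin n, (d (w (i:ℕ)):ℝ)) := by
      intro n
      simpa using hmeasval n (fun v => h (compSeq g n v x) / ∏ i, (d (v i):ℝ))
    apply measurable_of_tendsto_metrizable happrox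
    rw [tendsto_pi_nhds]
    intro w
    rw [tendsto_iff_norm_sub_tendsto_zero]
    have hlim : Filter.Tendsto (fun n : ℕ => 2*c/2^n) Filter.atTop (nhds 0) := by
      have := (tendsto_pow_atTop_nhds_zero_of_lt_one
        (by norm_num : (0:ℝ) ≤ 1/2) (by norm_num : (1/2:ℝ) < 1)).const_mul (2*c)
      simpa [div_eq_mul_inv, ← inv_pow] using this
    refine squeeze_zero_norm (fun n => ?_) hlim
    rw [Real.norm_eq_abs, Real.norm_eq_abs, abs_abs, abs_sub_comm]
    exact key2 n w x
  have hHwInt : ∀ x : X, Integrable (fun w : ℕ → Fin k => Hw w x) μ := by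
    intro x
    refine (integrable_const (|h x| + 2*c)).mono' (hmeasHw x).aestronglyMeasurable
      (Filter.Eventually.of_forall fun w => ?_)
    rw [Real.norm_eq_abs]
    have h1 := hHw1 w x
    have h2 : |Hw w x| ≤ |h x| + |Hw w x - h x| := by
      have := abs_add_le (h x) (Hw w x - h x)
      simpa using this
    linarith
  -- bound (b)
  have keyB : ∀ (n : ℕ) (x : X),
      |(∫ w, Hw w x ∂μ) - (∑ v : Fin n → Fin k, h (compSeq g n v x)) / D^n| ≤ 2*c / 2^n := by
    intro n x
    have hAint : Integrable (fun w : ℕ → Fin k =>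
        h (compSeq g n (fun i : Fin n => w (i:ℕ)) x) / ∏ i : Fin n, (d (w (i:ℕ)):ℝ)) μ := by
      simpa using hintval n (fun v => h (compSeq g n v x) / ∏ i, (d (v i):ℝ))
    rw [← key4 n x, ← integral_sub (hHwInt x) hAint]
    have := norm_integral_le_of_norm_le_const (μ := μ) (C := 2*c/2^n)
      (f := fun w : ℕ → Fin k => Hw w x
        - h (compSeq g n (fun i : Fin n => w (i:ℕ)) x) / ∏ i : Fin n, (d (w (i:ℕ)):ℝ))
      (Filter.Eventually.of_forall fun w => by
        rw [Real.norm_eq_abs]; exact key2 n w x)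
    simpa [measure_univ] using this
  -- main identity
  have main : ∀ x : X, HH x = (∫ w, Hw w x ∂μ) := by
    intro x
    have hbnd : ∀ n : ℕ, |HH x - (∫ w, Hw w x ∂μ)| ≤ (C + 2*c) / 2^n := by
      intro n
      have hA := keyA n x
      have hB := keyB n x
      have htri : |HH x - (∫ w, Hw w x ∂μ)|
          ≤ |HH x - (∑ v : Fin n → Fin k, h (compSeq g n v x)) / D^n|
            + |(∑ v : Fin n → Fin k, h (compSeq g n v x)) / D^n - (∫ w, Hw w x ∂μ)| :=
        abs_sub_le _ _ _
      rw [abs_sub_comm ((∑ v : Fin n → Fin k, h (compSeq g n v x)) / D^n)] at htri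
      have : (C + 2*c)/2^n = C/2^n + 2*c/2^n := by ring
      rw [this]
      linarith
    have hlim : Filter.Tendsto (fun n : ℕ => (C + 2*c) / 2^n) Filter.atTop (nhds 0) := by
      have := (tendsto_pow_atTop_nhds_zero_of_lt_one
        (by norm_num : (0:ℝ) ≤ 1/2) (by norm_num : (1/2:ℝ) < 1)).const_mul (C + 2*c)
      simpa [div_eq_mul_inv, ← inv_pow] using this
    have h0 : |HH x - (∫ w, Hw w x ∂μ)| ≤ 0 := ge_of_tendsto' hlim hbnd
    have h1 : HH x - (∫ w, Hw w x ∂μ) = 0 := by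
      have := abs_nonneg (HH x - (∫ w, Hw w x ∂μ))
      exact abs_eq_zero.mp (le_antisymm h0 this)
    linarith
  refine ⟨main, fun x => ?_⟩
  have h1 : (∫ w, Hw w x ∂μ) - h x = ∫ w, (Hw w x - h x) ∂μ := by
    rw [integral_sub (hHwInt x) (integrable_const _), integral_const, measureReal_def, measure_univ]
    simp
  have h2 : |(∫ w, (Hw w x - h x) ∂μ)| ≤ 2*c := by
    have := norm_integral_le_of_norm_le_const (μ := μ) (C := 2*c)
      (f := fun w : ℕ → Fin k => Hw w x - h x)
      (Filter.Eventually.of_forall fun w => by rw [Real.norm_eq_abs]; exact hHw1 w x)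
    simpa [measure_univ] using this
  rw [main x]
  calc |(∫ w, Hw w x ∂μ) - h x| = |(∫ w, (Hw w x - h x) ∂μ)| := by rw [h1]
    _ ≤ 2*c := h2
    _ ≤ 4*c := by linarith
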